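/- Every matrix U ∈ ℂ^{n×n} that is both unitary (UUᴴ = Iₙ) and symmetric (U = Uᵀ) admits a factorization U = QQᵀ for some unitary matrix Q ∈ ℂ^{n×n}. -/

import Mathlib

open Matrix

open scoped Matrix.Norms.L2Operator

noncomputable instance matrixFinCStarAlgebra {n : ℕ} :
    CStarAlgebra (Matrix (Fin n) (Fin n) ℂ) where

private lemma transpose_conjTranspose' {n : ℕ} (A : Matrix (Fin n) (Fin n) ℂ) :
    (Aᴴ)ᵀ = (Aᵀ)ᴴ := by
  ext i j
  simp [Matrix.conjTranspose_apply, Matrix.transpose_apply]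

/-- For a normal symmetric matrix, the continuous functional calculus produces
symmetric matrices. -/
private lemma transpose_cfcHom {n : ℕ} {U : Matrix (Fin n) (Fin n) ℂ} (hN : IsStarNormal U)
    (hUs : Uᵀ = U) (f : C(spectrum ℂ U, ℂ)) :
    (cfcHom hN (R := ℂ) f)ᵀ = cfcHom hN (R := ℂ) f := by
  have hct : Continuous fun M : Matrix (Fin n) (Fin n) ℂ => Mᵀ :=
    (Matrix.transposeLinearEquiv (Fin n) (Fin n) ℂ ℂ).toLinearMap.continuous_of_finiteDimensional
  let φ : C(spectrum ℂ U, ℂ) →⋆ₐ[ℂ] Matrix (Fin n) (Fin n) ℂ :=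
  { toFun := fun g => (cfcHom hN (R := ℂ) g)ᵀ
    map_one' := by simp
    map_mul' := fun g h => by
      have hc : cfcHom hN (R := ℂ) g * cfcHom hN (R := ℂ) h
          = cfcHom hN (R := ℂ) h * cfcHom hN (R := ℂ) g := by
        rw [← _root_.map_mul, ← _root_.map_mul, mul_comm]
      rw [_root_.map_mul, hc, Matrix.transpose_mul]
    map_zero' := by simp
    map_add' := fun g h => by
      rw [_root_.map_add, Matrix.transpose_add]
    commutes' := fun r => by
      simp only [Algebra.algebraMap_eq_smul_one]
      rw [_root_.map_smul, _root_.map_one, Matrix.transpose_smul, Matrix.transpose_one]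
    map_star' := fun g => by
      rw [map_star, Matrix.star_eq_conjTranspose, Matrix.star_eq_conjTranspose,
        transpose_conjTranspose' ] }
  have h1 : cfcHom hN (R := ℂ) = φ := by
    apply cfcHom_eq_of_continuous_of_map_id
    · exact hct.comp (cfcHom_isClosedEmbedding hN).continuous
    · show (cfcHom hN (R := ℂ) _)ᵀ = U
      rw [cfcHom_id hN, hUs]
  exact (DFunLike.congr_fun h1 f).symm

private lemma exists_not_mem_spectrum_norm_one {n : ℕ} (U : Matrix (Fin n) (Fin n) ℂ) :
    ∃ d : ℂ, ‖d‖ = 1 ∧ d ∉ spectrum ℂ U := by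
  have hfin : (spectrum ℂ U).Finite := Matrix.finite_spectrum U
  -- rational parametrization of the circle gives an injection ℝ → sphere
  set g : ℝ → ℂ := fun t => ⟨(1 - t ^ 2) / (1 + t ^ 2), 2 * t / (1 + t ^ 2)⟩ with hg
  have hpos : ∀ t : ℝ, (0 : ℝ) < 1 + t ^ 2 := fun t => by positivity
  have hnorm : ∀ t : ℝ, ‖g t‖ = 1 := by
    intro t
    have h0 : (1 + t ^ 2) ≠ 0 := (hpos t).ne'
    have : ‖g t‖ ^ 2 = 1 := by
      rw [← Complex.normSq_eq_norm_sq]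
      simp only [Complex.normSq_mk, hg]
      field_simp
      ring
    nlinarith [norm_nonneg (g t)]
  have hkey : ∀ t : ℝ, (g t).im / (1 + (g t).re) = t := by
    intro t
    have h0 : (1 + t ^ 2) ≠ 0 := (hpos t).ne'
    have e1 : 1 + (g t).re = 2 / (1 + t ^ 2) := by
      simp only [hg]
      field_simp
      norm_num
    rw [e1]
    simp only [hg]
    field_simp
  have hinj : Function.Injective g := by
    intro s t hst
    have := hkey s
    rw [hst, hkey t] at this
    exact this.symm
  have hInf : (Set.range g).Infinite := Set.infinite_range_of_injective hinj
  obtain ⟨d, hd, hd2⟩ := (hInf.diff hfin).nonempty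
  obtain ⟨t, rfl⟩ := hd
  exact ⟨g t, hnorm t, hd2⟩

/-- Every unitary and symmetric matrix `U` factors as `U = Q * Qᵀ` with `Q` unitary. -/
theorem unitary_symmetric_factorization {n : ℕ} (U : Matrix (Fin n) (Fin n) ℂ)
    (hU : U * Uᴴ = 1) (hUs : U = Uᵀ) :
    ∃ Q : Matrix (Fin n) (Fin n) ℂ, Q * Qᴴ = 1 ∧ U = Q * Qᵀ := by
  have hU' : Uᴴ * U = 1 := mul_eq_one_comm.mp hU
  have hN : IsStarNormal U := by
    refine ⟨?_⟩
    show star U * U = U * star U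
    rw [Matrix.star_eq_conjTranspose, hU, hU']
  have hUmem : U ∈ unitary (Matrix (Fin n) (Fin n) ℂ) := by
    constructor
    · rw [Matrix.star_eq_conjTranspose]; exact hU'
    · rw [Matrix.star_eq_conjTranspose]; exact hU
  have hspec : ∀ z ∈ spectrum ℂ U, ‖z‖ = 1 := fun z hz => by
    have := spectrum.subset_circle_of_unitary hUmem hz
    simpa [mem_sphere_zero_iff_norm] using this
  obtain ⟨d, hd1, hdT⟩ := exists_not_mem_spectrum_norm_one U
  set c : ℂ := -d with hc
  have hc1 : ‖c‖ = 1 := by rw [hc, norm_neg]; exact hd1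
  have hc0 : c ≠ 0 := by intro h; rw [h] at hc1; simp at hc1
  obtain ⟨b, hb⟩ : ∃ b : ℂ, b ^ 2 = c := IsAlgClosed.exists_pow_nat_eq c (by norm_num)
  have hb1 : ‖b‖ = 1 := by
    have : ‖b‖ ^ 2 = 1 := by rw [← norm_pow, hb, hc1]
    nlinarith [norm_nonneg b]
  set f : ℂ → ℂ := fun z => b * Complex.exp (Complex.log (z / c) / 2) with hf_def
  have hslit : ∀ z ∈ spectrum ℂ U, z / c ∈ Complex.slitPlane := by
    intro z hz
    have hz1 : ‖z‖ = 1 := hspec z hz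
    have hzc : ‖z / c‖ = 1 := by rw [norm_div, hz1, hc1, div_one]
    have hne : z / c ≠ -1 := by
      intro h
      have : z = -c := by
        field_simp at h
        linear_combination h
      rw [this, hc, neg_neg] at hz
      exact hdT hz
    rw [Complex.mem_slitPlane_iff]
    by_contra hcon
    push_neg at hcon
    obtain ⟨hre, him⟩ := hcon
    apply hne
    have hsq : (z / c).re * (z / c).re + (z / c).im * (z / c).im = 1 := by
      rw [← Complex.normSq_apply, Complex.normSq_eq_norm_sq, hzc]
      norm_num
    rw [him] at hsq
    have : (z / c).re = -1 := by nlinarith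
    apply Complex.ext <;> simp [this, him]
  have hf : ContinuousOn f (spectrum ℂ U) := by
    intro z hz
    have c1 : ContinuousAt (fun w : ℂ => w / c) z := continuousAt_id.div_const c
    have c2 : ContinuousAt Complex.log (z / c) := continuousAt_clog (hslit z hz)
    have c3 : ContinuousAt (fun w : ℂ => Complex.log (w / c)) z := ContinuousAt.comp (x := z) (f := fun w : ℂ => w / c) c2 c1
    have c4 : ContinuousAt (fun w : ℂ => Complex.log (w / c) / 2) z := c3.div_const 2
    have c5 : ContinuousAt (fun w : ℂ => Complex.exp (Complex.log (w / c) / 2)) z :=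
      Complex.continuous_exp.continuousAt.comp c4
    have h1 : ContinuousAt f z := continuousAt_const.mul c5
    exact h1.continuousWithinAt
  have hz0 : ∀ z ∈ spectrum ℂ U, z / c ≠ 0 := by
    intro z hz h
    have hz1 : ‖z‖ = 1 := hspec z hz
    rw [div_eq_zero_iff] at h
    rcases h with h | h
    · rw [h] at hz1; simp at hz1
    · exact hc0 h
  have hsq : ∀ z ∈ spectrum ℂ U, f z * f z = z := by
    intro z hz
    have h1 : f z * f z
        = b ^ 2 * Complex.exp (Complex.log (z / c) / 2 + Complex.log (z / c) / 2) := by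
      rw [Complex.exp_add, hf_def]; ring
    rw [h1, hb]
    have h2 : Complex.log (z / c) / 2 + Complex.log (z / c) / 2 = Complex.log (z / c) := by ring
    rw [h2, Complex.exp_log (hz0 z hz)]
    field_simp
  have hnorm_f : ∀ z ∈ spectrum ℂ U, f z * star (f z) = 1 := by
    intro z hz
    have hfn : ‖f z‖ = 1 := by
      have hzc : ‖z / c‖ = 1 := by rw [norm_div, hspec z hz, hc1, div_one]
      have he2 : ‖Complex.exp (Complex.log (z / c) / 2)‖ ^ 2 = 1 := by
        rw [sq, ← norm_mul, ← Complex.exp_add]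
        have h2 : Complex.log (z / c) / 2 + Complex.log (z / c) / 2 = Complex.log (z / c) := by
          ring
        rw [h2, Complex.norm_exp, Complex.log_re]
        rw [hzc]
        simp
      have he : ‖Complex.exp (Complex.log (z / c) / 2)‖ = 1 := by
        nlinarith [norm_nonneg (Complex.exp (Complex.log (z / c) / 2))]
      rw [hf_def]
      simp only [norm_mul, hb1, he, one_mul]
    have h3 := Complex.mul_conj (f z)
    show f z * (starRingEnd ℂ) (f z) = 1
    rw [h3, Complex.normSq_eq_norm_sq, hfn]
    norm_num
  refine ⟨cfc f U, ?_, ?_⟩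
  · have h1 : (cfc f U)ᴴ = cfc (fun z => star (f z)) U := by
      rw [cfc_star f U, Matrix.star_eq_conjTranspose]
    rw [h1, ← cfc_mul f _ U hf hf.star]
    rw [cfc_congr (fun z hz => hnorm_f z hz)]
    exact cfc_const_one ℂ U
  · have hsymm : (cfc f U)ᵀ = cfc f U := by
      rw [cfc_apply f U hN hf]
      exact transpose_cfcHom hN hUs.symm _
    rw [hsymm, ← cfc_mul f f U hf hf]
    rw [cfc_congr (fun z hz => hsq z hz)]
    exact (cfc_id ℂ U hN).symm
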